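/- Let (Ω, F, P) be a probability space, X a random variable with values in [0,1], and (K_i)_{i∈ℕ} random variables with values in {0,1} such that for every finite set S ⊂ ℕ and every bounded Borel measurable h : [0,1] → ℝ one has E( h(X) ∏_{i∈S} K_i ) = E( h(X) X^{|S|} ). Then n^{−1} Σ_{i=1}^{n} K_i converges to X almost surely as n → ∞. -/

import Mathlib

open MeasureTheory Filter

lemma bdd_int {Ω : Type*} [MeasurableSpace Ω] (P : Measure Ω) [IsFiniteMeasure P]
    {f : Ω → ℝ} (hf : Measurable f) {c : ℝ} (hc : ∀ ω, |f ω| ≤ c) : Integrable f P :=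
  (integrable_const c).mono' hf.aestronglyMeasurable
    (Filter.Eventually.of_forall (by simpa [Real.norm_eq_abs] using hc))

/-- strong law of large numbers for exchangeable(X) indicators.  If the
`{0,1}`-valued random variables `(K_i)` satisfy `E(h(X) ∏_{i∈S} K_i) = E(h(X) X^{|S|})`
for every finite `S` and every bounded Borel measurable `h`, then the empirical mean
`n⁻¹ ∑_{i=1}^n K_i` converges almost surely to `X` (indicators indexed by `i : ℕ`). -/
theorem exchangeable_indicators_lln
    {Ω : Type*} [MeasurableSpace Ω] (P : Measure Ω) [IsProbabilityMeasure P]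
    (X : Ω → ℝ) (hXmeas : Measurable X) (hXrange : ∀ ω, X ω ∈ Set.Icc (0 : ℝ) 1)
    (K : ℕ → Ω → ℝ) (hKmeas : ∀ i, Measurable (K i))
    (hK01 : ∀ i ω, K i ω = 0 ∨ K i ω = 1)
    (hexch : ∀ S : Finset ℕ, ∀ h : ℝ → ℝ, Measurable h → (∃ c : ℝ, ∀ y, |h y| ≤ c) →
      ∫ ω, h (X ω) * ∏ i ∈ S, K i ω ∂P = ∫ ω, h (X ω) * (X ω) ^ S.card ∂P) :
    ∀ᵐ ω ∂P, Tendsto (fun n : ℕ => (∑ i ∈ Finset.range n, K i ω) / n) atTop (nhds (X ω)) := by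
  have hX0 : ∀ ω, 0 ≤ X ω := fun ω => (hXrange ω).1
  have hX1 : ∀ ω, X ω ≤ 1 := fun ω => (hXrange ω).2
  have hXbd : ∀ ω, |X ω| ≤ 1 := fun ω => abs_le.mpr ⟨by linarith [hX0 ω], hX1 ω⟩
  have hK0 : ∀ i ω, 0 ≤ K i ω := fun i ω => by rcases hK01 i ω with h | h <;> simp [h]
  have hK1 : ∀ i ω, K i ω ≤ 1 := fun i ω => by rcases hK01 i ω with h | h <;> simp [h]
  have hKbd : ∀ i ω, |K i ω| ≤ 1 := fun i ω => abs_le.mpr ⟨by linarith [hK0 i ω], hK1 i ω⟩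
  -- moment 1
  have m1 : ∀ i, ∫ ω, K i ω ∂P = ∫ ω, X ω ∂P := by
    intro i
    have := hexch {i} (fun _ => 1) measurable_const ⟨1, fun y => by simp⟩
    simpa using this
  -- clamp
  set cl : ℝ → ℝ := fun y => max 0 (min y 1) with hcl
  have hclmeas : Measurable cl := measurable_const.max (measurable_id.min measurable_const)
  have hclbd : ∀ y, |cl y| ≤ 1 := fun y => abs_le.mpr ⟨by simp [hcl], by simp [hcl]⟩
  have hclX : ∀ ω, cl (X ω) = X ω := fun ω => by
    simp [hcl, min_eq_left (hX1 ω), max_eq_right (hX0 ω)]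
  have m2 : ∀ i, ∫ ω, X ω * K i ω ∂P = ∫ ω, X ω * X ω ∂P := by
    intro i
    have := hexch {i} cl hclmeas ⟨1, hclbd⟩
    simpa [hclX] using this
  have m3 : ∀ i j, i ≠ j → ∫ ω, K i ω * K j ω ∂P = ∫ ω, X ω * X ω ∂P := by
    intro i j hij
    have := hexch {i, j} (fun _ => 1) measurable_const ⟨1, fun y => by simp⟩
    simpa [Finset.prod_insert, Finset.mem_singleton, hij, Finset.card_insert_of_notMem, sq]
      using this
  -- integrability of products of 1-bounded measurables
  have hI : ∀ f g : Ω → ℝ, Measurable f → Measurable g → (∀ ω, |f ω| ≤ 1) → (∀ ω, |g ω| ≤ 1) →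
      Integrable (fun ω => f ω * g ω) P := by
    intro f g hf hg hbf hbg
    refine bdd_int P (hf.mul hg) (c := 1) fun ω => ?_
    rw [abs_mul]
    calc |f ω| * |g ω| ≤ 1 * 1 := mul_le_mul (hbf ω) (hbg ω) (abs_nonneg _) zero_le_one
    _ = 1 := by ring
  have iKK : ∀ i j, Integrable (fun ω => K i ω * K j ω) P :=
    fun i j => hI _ _ (hKmeas i) (hKmeas j) (hKbd i) (hKbd j)
  have iXK : ∀ i, Integrable (fun ω => X ω * K i ω) P :=
    fun i => hI _ _ hXmeas (hKmeas i) hXbd (hKbd i)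
  have iXX : Integrable (fun ω => X ω * X ω) P := hI _ _ hXmeas hXmeas hXbd hXbd
  have iAA : ∀ i j, Integrable (fun ω => (K i ω - X ω) * (K j ω - X ω)) P :=
    fun i j => hI _ _ ((hKmeas i).sub hXmeas) ((hKmeas j).sub hXmeas)
      (fun ω => abs_le.mpr ⟨by linarith [hK0 i ω, hX1 ω], by linarith [hK1 i ω, hX0 ω]⟩)
      (fun ω => abs_le.mpr ⟨by linarith [hK0 j ω, hX1 ω], by linarith [hK1 j ω, hX0 ω]⟩)
  have isub : ∀ {f g : Ω → ℝ}, Integrable f P → Integrable g P →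
      Integrable (fun ω => f ω - g ω) P := fun hf hg => hf.sub hg
  -- cross terms vanish
  have cross : ∀ i j, i ≠ j → ∫ ω, (K i ω - X ω) * (K j ω - X ω) ∂P = 0 := by
    intro i j hij
    have e : (fun ω => (K i ω - X ω) * (K j ω - X ω))
        = fun ω => (K i ω * K j ω - X ω * K i ω) - (X ω * K j ω - X ω * X ω) :=
      funext fun ω => by ring
    rw [e, integral_sub (isub (iKK i j) (iXK i)) (isub (iXK j) iXX),
      integral_sub (iKK i j) (iXK i), integral_sub (iXK j) iXX, m3 i j hij, m2 i, m2 j]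
    ring
  -- diagonal terms bounded by 1
  have diag : ∀ i, ∫ ω, (K i ω - X ω) * (K i ω - X ω) ∂P ≤ 1 := by
    intro i
    have hKK : ∀ ω, K i ω * K i ω = K i ω := fun ω => by rcases hK01 i ω with h | h <;> simp [h]
    have e : (fun ω => (K i ω - X ω) * (K i ω - X ω))
        = fun ω => (K i ω - X ω * K i ω) - (X ω * K i ω - X ω * X ω) :=
      funext fun ω => by rw [show (K i ω - X ω) * (K i ω - X ω)
        = K i ω * K i ω - X ω * K i ω - (X ω * K i ω - X ω * X ω) from by ring, hKK]
    have iK : Integrable (K i) P := bdd_int P (hKmeas i) (hKbd i)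
    have iX : Integrable X P := bdd_int P hXmeas hXbd
    rw [e, integral_sub (isub iK (iXK i)) (isub (iXK i) iXX),
      integral_sub iK (iXK i), integral_sub (iXK i) iXX, m1 i, m2 i]
    have h1 : ∫ ω, X ω ∂P ≤ 1 := by
      calc ∫ ω, X ω ∂P ≤ ∫ _ω, (1 : ℝ) ∂P := integral_mono iX (integrable_const 1) hX1
      _ = 1 := by simp
    have h2 : 0 ≤ ∫ ω, X ω * X ω ∂P :=
      integral_nonneg fun ω => mul_nonneg (hX0 ω) (hX0 ω)
    linarith
  -- second moment bound
  have key : ∀ n : ℕ, ∫ ω, (∑ i ∈ Finset.range n, (K i ω - X ω))^2 ∂P ≤ (n : ℝ) := by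
    intro n
    have e : (fun ω => (∑ i ∈ Finset.range n, (K i ω - X ω))^2)
        = fun ω => ∑ i ∈ Finset.range n, ∑ j ∈ Finset.range n,
            (K i ω - X ω) * (K j ω - X ω) := by
      funext ω
      rw [sq, Finset.sum_mul_sum]
    rw [e, integral_finset_sum _ (fun i _ => integrable_finset_sum _ (fun j _ => iAA i j))]
    have : ∀ i ∈ Finset.range n,
        (∫ ω, ∑ j ∈ Finset.range n, (K i ω - X ω) * (K j ω - X ω) ∂P) ≤ 1 := by
      intro i hi
      rw [integral_finset_sum _ (fun j _ => iAA i j),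
        Finset.sum_eq_single_of_mem i hi (fun j _ hj => cross i j (Ne.symm hj))]
      exact diag i
    calc (∑ i ∈ Finset.range n, ∫ ω, ∑ j ∈ Finset.range n,
          (K i ω - X ω) * (K j ω - X ω) ∂P) ≤ ∑ i ∈ Finset.range n, (1:ℝ) :=
        Finset.sum_le_sum this
    _ = n := by simp
  -- normalized second moment bound along squares
  have key2 : ∀ n : ℕ, 1 ≤ n →
      ∫ ω, ((∑ i ∈ Finset.range (n^2), (K i ω - X ω)) / ((n^2 : ℕ) : ℝ))^2 ∂P
        ≤ 1 / (n:ℝ)^2 := by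
    intro n hn
    have hc : ((n^2 : ℕ) : ℝ) = (n:ℝ)^2 := by push_cast; ring
    have e : (fun ω => ((∑ i ∈ Finset.range (n^2), (K i ω - X ω)) / ((n^2:ℕ):ℝ))^2)
        = fun ω => ((∑ i ∈ Finset.range (n^2), (K i ω - X ω))^2) / (((n:ℝ)^2)^2) := by
      funext ω; rw [div_pow, hc]
    have hn' : (0:ℝ) < (n:ℝ) := by exact_mod_cast hn
    rw [e, integral_div]
    calc (∫ ω, (∑ i ∈ Finset.range (n^2), (K i ω - X ω))^2 ∂P) / (((n:ℝ)^2)^2)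
        ≤ ((n^2:ℕ):ℝ) / (((n:ℝ)^2)^2) := by gcongr; exact key (n^2)
      _ = 1 / (n:ℝ)^2 := by rw [hc]; field_simp
  -- a.e. convergence along squares
  have haeseq : ∀ᵐ ω ∂P, Tendsto
      (fun n : ℕ => (∑ i ∈ Finset.range (n^2), (K i ω - X ω)) / ((n^2:ℕ):ℝ))
      atTop (nhds 0) := by
    set g : ℕ → Ω → ℝ :=
      fun n ω => ((∑ i ∈ Finset.range (n^2), (K i ω - X ω)) / ((n^2:ℕ):ℝ))^2 with hg
    have hgnn : ∀ n ω, 0 ≤ g n ω := fun n ω => sq_nonneg _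
    have hgmeas : ∀ n, Measurable (g n) := fun n =>
      ((Finset.measurable_sum _ fun i _ => (hKmeas i).sub hXmeas).div_const _).pow_const 2
    have hgbd : ∀ n ω, |g n ω| ≤ 1 := by
      intro n ω
      have h1 : |(∑ i ∈ Finset.range (n^2), (K i ω - X ω))| ≤ ((n^2:ℕ):ℝ) := by
        calc |(∑ i ∈ Finset.range (n^2), (K i ω - X ω))|
            ≤ ∑ i ∈ Finset.range (n^2), |K i ω - X ω| := Finset.abs_sum_le_sum_abs _ _
          _ ≤ ∑ _i ∈ Finset.range (n^2), (1:ℝ) := Finset.sum_le_sum fun i _ =>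
              abs_le.mpr ⟨by linarith [hK0 i ω, hX1 ω], by linarith [hK1 i ω, hX0 ω]⟩
          _ = ((n^2:ℕ):ℝ) := by simp
      have h2 : |(∑ i ∈ Finset.range (n^2), (K i ω - X ω)) / ((n^2:ℕ):ℝ)| ≤ 1 := by
        rcases Nat.eq_zero_or_pos n with h0 | hpos
        · subst h0; simp
        · rw [abs_div, abs_of_nonneg (by positivity : (0:ℝ) ≤ ((n^2:ℕ):ℝ))]
          rw [div_le_one (by positivity)]
          exact h1
      have := abs_le.mp h2
      simp only [hg]
      rw [abs_of_nonneg (sq_nonneg _)]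
      nlinarith [this.1, this.2]
    have hgint : ∀ n, Integrable (g n) P := fun n => bdd_int P (hgmeas n) (hgbd n)
    have hlb : ∀ n, ∫⁻ ω, ENNReal.ofReal (g n ω) ∂P ≤ ENNReal.ofReal (1/(n:ℝ)^2) := by
      intro n
      rcases Nat.eq_zero_or_pos n with h0 | h1
      · subst h0
        have : ∀ ω, g 0 ω = 0 := fun ω => by simp [hg]
        simp [this]
      · rw [← ofReal_integral_eq_lintegral_ofReal (hgint n)
          (Filter.Eventually.of_forall (hgnn n))]
        exact ENNReal.ofReal_le_ofReal (key2 n h1)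
    have hts : ∑' n, ∫⁻ ω, ENNReal.ofReal (g n ω) ∂P ≠ ⊤ := by
      have hsummable : Summable (fun n : ℕ => 1/(n:ℝ)^2) :=
        Real.summable_one_div_nat_pow.mpr one_lt_two
      have hle : ∑' n, ∫⁻ ω, ENNReal.ofReal (g n ω) ∂P
          ≤ ∑' n : ℕ, ENNReal.ofReal (1/(n:ℝ)^2) := ENNReal.tsum_le_tsum hlb
      refine ne_top_of_le_ne_top ?_ hle
      rw [← ENNReal.ofReal_tsum_of_nonneg (fun n => by positivity) hsummable]
      exact ENNReal.ofReal_ne_top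
    have hae1 : ∀ᵐ ω ∂P, ∑' n, ENNReal.ofReal (g n ω) < ⊤ := by
      refine ae_lt_top (Measurable.ennreal_tsum fun n => (hgmeas n).ennreal_ofReal) ?_
      rw [lintegral_tsum fun n => ((hgmeas n).ennreal_ofReal).aemeasurable]
      exact hts
    filter_upwards [hae1] with ω hω
    have h0 : Tendsto (fun n => ENNReal.ofReal (g n ω)) atTop (nhds 0) :=
      ENNReal.tendsto_atTop_zero_of_tsum_ne_top hω.ne
    have h1 : Tendsto (fun n => g n ω) atTop (nhds 0) := by
      have h := (ENNReal.tendsto_toReal (show (0:ENNReal) ≠ ⊤ from by simp)).comp h0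
      simp only [Function.comp_def] at h
      rw [ENNReal.toReal_zero] at h
      exact (h.congr fun n => ENNReal.toReal_ofReal (hgnn n ω))
    have h2 : Tendsto (fun n =>
        |(∑ i ∈ Finset.range (n^2), (K i ω - X ω)) / ((n^2:ℕ):ℝ)|) atTop (nhds 0) := by
      have h := (Real.continuous_sqrt.tendsto 0).comp h1
      simp only [Real.sqrt_zero] at h
      exact h.congr fun n => by simp [Function.comp, hg, Real.sqrt_sq_eq_abs]
    exact tendsto_of_tendsto_of_tendsto_of_le_of_le (by simpa using h2.neg) h2
      (fun n => neg_abs_le _) (fun n => le_abs_self _)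
  -- convergence of empirical means along squares
  have haeX : ∀ᵐ ω ∂P, Tendsto
      (fun n : ℕ => (∑ i ∈ Finset.range (n^2), K i ω) / ((n^2:ℕ):ℝ)) atTop (nhds (X ω)) := by
    filter_upwards [haeseq] with ω hω
    have h : Tendsto (fun n : ℕ =>
        (∑ i ∈ Finset.range (n^2), (K i ω - X ω)) / ((n^2:ℕ):ℝ) + X ω) atTop (nhds (X ω)) := by
      simpa using hω.add (tendsto_const_nhds (x := X ω))
    refine h.congr' ?_
    filter_upwards [eventually_ge_atTop 1] with n hn
    have h1 : (1:ℝ) ≤ (n:ℝ) := by exact_mod_cast hn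
    have hm : ((n^2:ℕ):ℝ) ≠ 0 := by push_cast; positivity
    have e : ∑ i ∈ Finset.range (n^2), (K i ω - X ω)
        = (∑ i ∈ Finset.range (n^2), K i ω) - ((n^2:ℕ):ℝ) * X ω := by
      rw [Finset.sum_sub_distrib, Finset.sum_const, Finset.card_range, nsmul_eq_mul]
    rw [e, sub_div, mul_div_cancel_left₀ _ hm, sub_add_cancel]
  -- sandwich argument
  filter_upwards [haeX] with ω hconv
  have hK0' : ∀ i, 0 ≤ K i ω := fun i => hK0 i ω
  have hmono : ∀ a b : ℕ, a ≤ b →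
      (∑ i ∈ Finset.range a, K i ω) ≤ ∑ i ∈ Finset.range b, K i ω := fun a b hab =>
    Finset.sum_le_sum_of_subset_of_nonneg (Finset.range_subset_range.mpr hab) fun i _ _ => hK0' i
  have hnn : ∀ a : ℕ, 0 ≤ ∑ i ∈ Finset.range a, K i ω := fun a =>
    Finset.sum_nonneg fun i _ => hK0' i
  have hsq : Tendsto Nat.sqrt atTop atTop := by
    refine tendsto_atTop_atTop.mpr fun b => ⟨b*b, fun m hm => ?_⟩
    exact Nat.le_sqrt.mpr hm
  have h1div : Tendsto (fun n : ℕ => (n:ℝ)/((n:ℝ)+1)) atTop (nhds 1) := by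
    have h := (tendsto_const_nhds (x := (1:ℝ))).sub tendsto_one_div_add_atTop_nhds_zero_nat
    rw [sub_zero] at h
    refine h.congr fun n => ?_
    have hne : ((n:ℝ)+1) ≠ 0 := by positivity
    field_simp
    ring
  have hL : Tendsto (fun n : ℕ =>
      (∑ i ∈ Finset.range (n^2), K i ω) / ((n:ℝ)+1)^2) atTop (nhds (X ω)) := by
    have hfac : Tendsto (fun n : ℕ => ((n:ℝ)/((n:ℝ)+1))^2) atTop (nhds 1) := by
      simpa using h1div.pow 2
    have h := hconv.mul hfac
    rw [mul_one] at h
    refine h.congr' ?_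
    filter_upwards [eventually_ge_atTop 1] with n hn
    have h1 : (1:ℝ) ≤ (n:ℝ) := by exact_mod_cast hn
    have hne : (n:ℝ) ≠ 0 := by linarith
    have hne2 : ((n:ℝ)+1) ≠ 0 := by linarith
    have hc : ((n^2:ℕ):ℝ) = (n:ℝ)^2 := by push_cast; ring
    rw [hc]
    field_simp
  have hU : Tendsto (fun n : ℕ =>
      (∑ i ∈ Finset.range ((n+1)^2), K i ω) / ((n:ℝ))^2) atTop (nhds (X ω)) := by
    have hshift : Tendsto (fun n : ℕ =>
        (∑ i ∈ Finset.range ((n+1)^2), K i ω) / (((n+1)^2:ℕ):ℝ)) atTop (nhds (X ω)) :=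
      hconv.comp (tendsto_add_atTop_nat 1)
    have hfac : Tendsto (fun n : ℕ => (((n:ℝ)+1)/(n:ℝ))^2) atTop (nhds 1) := by
      have h := (tendsto_const_nhds (x := (1:ℝ))).add tendsto_one_div_atTop_nhds_zero_nat
      rw [add_zero] at h
      have h' : Tendsto (fun n : ℕ => ((n:ℝ)+1)/(n:ℝ)) atTop (nhds 1) := by
        refine h.congr' ?_
        filter_upwards [eventually_ge_atTop 1] with n hn
        have h1 : (1:ℝ) ≤ (n:ℝ) := by exact_mod_cast hn
        have hne : (n:ℝ) ≠ 0 := by linarith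
        field_simp
      simpa using h'.pow 2
    have h := hshift.mul hfac
    rw [mul_one] at h
    refine h.congr' ?_
    filter_upwards [eventually_ge_atTop 1] with n hn
    have h1 : (1:ℝ) ≤ (n:ℝ) := by exact_mod_cast hn
    have hne : (n:ℝ) ≠ 0 := by linarith
    have hne2 : ((n:ℝ)+1) ≠ 0 := by linarith
    have hc : (((n+1)^2:ℕ):ℝ) = ((n:ℝ)+1)^2 := by push_cast; ring
    rw [hc]
    field_simp
  refine tendsto_of_tendsto_of_tendsto_of_le_of_le' (hL.comp hsq) (hU.comp hsq) ?_ ?_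
  · filter_upwards [eventually_ge_atTop 1] with m hm
    simp only [Function.comp]
    have hs1 : 1 ≤ Nat.sqrt m := by
      have := Nat.sqrt_pos.mpr (by omega : 0 < m)
      omega
    have hlow : (Nat.sqrt m)^2 ≤ m := by
      have := Nat.sqrt_le' m
      nlinarith [Nat.sqrt_le' m]
    have hhigh : m < (Nat.sqrt m + 1)^2 := by
      have := Nat.lt_succ_sqrt' m
      nlinarith [Nat.lt_succ_sqrt' m]
    have hmpos : (0:ℝ) < (m:ℝ) := by exact_mod_cast hm
    have hmle : (m:ℝ) ≤ ((Nat.sqrt m:ℝ)+1)^2 := by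
      have : (m:ℝ) < (((Nat.sqrt m + 1)^2 : ℕ):ℝ) := by exact_mod_cast hhigh
      push_cast at this
      linarith
    exact div_le_div₀ (hnn m) (hmono _ _ hlow) hmpos hmle
  · filter_upwards [eventually_ge_atTop 1] with m hm
    simp only [Function.comp]
    have hs1 : 1 ≤ Nat.sqrt m := by
      have := Nat.sqrt_pos.mpr (by omega : 0 < m)
      omega
    have hlow : (Nat.sqrt m)^2 ≤ m := by nlinarith [Nat.sqrt_le' m]
    have hhigh : m ≤ (Nat.sqrt m + 1)^2 := le_of_lt (by nlinarith [Nat.lt_succ_sqrt' m])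
    have hspos : (0:ℝ) < ((Nat.sqrt m:ℝ))^2 := by
      have : (1:ℝ) ≤ (Nat.sqrt m:ℝ) := by exact_mod_cast hs1
      positivity
    have hsle : ((Nat.sqrt m:ℝ))^2 ≤ (m:ℝ) := by
      have : (((Nat.sqrt m)^2 : ℕ):ℝ) ≤ (m:ℝ) := by exact_mod_cast hlow
      push_cast at this
      linarith
    exact div_le_div₀ (hnn _) (hmono _ _ hhigh) hspos hsle
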